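/- Let f : ℝⁿ → ℝ be twice continuously differentiable with Hessian Lipschitz continuous with constant L (in operator norm), let x ∈ ℝⁿ, and suppose ∇²f(x) is invertible. Let y¹, …, yᵖ ∈ ℝⁿ with p ≥ n, set zˡ = ∇²f(x)(yˡ − x) for ℓ = 1, …, p, Δ_y = max_{1 ≤ ℓ ≤ p} ‖yˡ − x‖, and Δ_z = max_{1 ≤ ℓ ≤ p} ‖zˡ‖, assumed positive. Let M_L^z be the p×n matrix whose ℓ-th row is (1/Δ_z)(zˡ)ᵀ, and suppose there is an n×p matrix A with A M_L^z = Iₙ and operator norm ‖A‖ ≤ Λ_z. If dᴺ ∈ ℝⁿ satisfies the Newton-direction interpolating conditions (zˡ)ᵀ dᴺ = −f(yˡ) + f(x) + ½ (yˡ − x)ᵀ zˡ for all ℓ = 1, …, p, then ‖ −∇²f(x)⁻¹ ∇f(x) − dᴺ ‖ ≤ Λ_z · √p · (L/6) · Δ_y³ / Δ_z. -/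

import Mathlib

open scoped Matrix RealInnerProductSpace Matrix.Norms.L2Operator

lemma aux_quad {E F : Type*} [NormedAddCommGroup E] [NormedSpace ℝ E]
    [NormedAddCommGroup F] [NormedSpace ℝ F] [CompleteSpace F]
    (g : E → F) (hess : E → E →L[ℝ] F) (L : ℝ)
    (hhess : ∀ u, HasFDerivAt g (hess u) u)
    (hLip : ∀ u v, ‖hess u - hess v‖ ≤ L * ‖u - v‖)
    (x h : E) : ‖g (x + h) - g x - hess x h‖ ≤ L / 2 * ‖h‖ ^ 2 := by
  have hconth : Continuous hess := by
    have : LipschitzWith L.toNNReal hess := by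
      apply LipschitzWith.of_dist_le_mul
      intro u v
      calc dist (hess u) (hess v) = ‖hess u - hess v‖ := by rw [dist_eq_norm]
        _ ≤ L * ‖u - v‖ := hLip u v
        _ ≤ L.toNNReal * ‖u - v‖ := by
            apply mul_le_mul_of_nonneg_right (Real.le_coe_toNNReal L) (norm_nonneg _)
        _ = L.toNNReal * dist u v := by rw [dist_eq_norm]
    exact this.continuous
  set φ : ℝ → F := fun t => g (x + t • h) - t • hess x h with hφ
  have hline : ∀ t : ℝ, HasDerivAt (fun s : ℝ => x + s • h) h t := by
    intro t
    simpa using ((hasDerivAt_id t).smul_const h).const_add x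
  have hφ' : ∀ t : ℝ, HasDerivAt φ (hess (x + t • h) h - hess x h) t := by
    intro t
    exact ((hhess (x + t • h)).comp_hasDerivAt t (hline t)).sub
      (by simpa using (hasDerivAt_id t).smul_const (hess x h))
  have hcont : Continuous fun t : ℝ => hess (x + t • h) h - hess x h := by
    apply Continuous.sub _ continuous_const
    exact ((hconth.comp (by continuity)).clm_apply continuous_const)
  have hFTC : φ 1 - φ 0 = ∫ t in (0:ℝ)..1, (hess (x + t • h) h - hess x h) :=
    (intervalIntegral.integral_eq_sub_of_hasDerivAt (fun t _ => hφ' t)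
      (hcont.intervalIntegrable 0 1)).symm
  have hbound : ∀ t ∈ Set.Ioc (0:ℝ) 1, ‖hess (x + t • h) h - hess x h‖ ≤ L * ‖h‖ ^ 2 * t := by
    intro t ht
    calc ‖hess (x + t • h) h - hess x h‖ = ‖(hess (x + t • h) - hess x) h‖ := by
          rw [ContinuousLinearMap.sub_apply]
      _ ≤ ‖hess (x + t • h) - hess x‖ * ‖h‖ := ContinuousLinearMap.le_opNorm _ _
      _ ≤ (L * ‖x + t • h - x‖) * ‖h‖ :=
          mul_le_mul_of_nonneg_right (hLip _ _) (norm_nonneg _)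
      _ = L * ‖h‖ ^ 2 * t := by
          rw [show x + t • h - x = t • h by abel, norm_smul, Real.norm_eq_abs,
            abs_of_pos ht.1]
          ring
  have hnn : 0 ≤ L / 2 * ‖h‖ ^ 2 := by
    have h1 := hbound 1 (by constructor <;> norm_num)
    have h0 := norm_nonneg (hess (x + (1:ℝ) • h) h - hess x h)
    nlinarith [h0.trans h1]
  have hineq : ‖∫ t in (0:ℝ)..1, (hess (x + t • h) h - hess x h)‖
      ≤ |∫ t in (0:ℝ)..1, L * ‖h‖ ^ 2 * t| := by
    apply intervalIntegral.norm_integral_le_abs_of_norm_le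
    · rw [Set.uIoc_of_le (by norm_num : (0:ℝ) ≤ 1)]
      exact (MeasureTheory.ae_restrict_iff' measurableSet_Ioc).2
        (Filter.Eventually.of_forall hbound)
    · exact (by continuity : Continuous fun t : ℝ => L * ‖h‖ ^ 2 * t).intervalIntegrable 0 1
  have hval : |∫ t in (0:ℝ)..1, L * ‖h‖ ^ 2 * t| = L / 2 * ‖h‖ ^ 2 := by
    rw [intervalIntegral.integral_const_mul, integral_id]
    rw [abs_of_nonneg (by linarith)]
    ring
  have hfin : ‖φ 1 - φ 0‖ ≤ L / 2 * ‖h‖ ^ 2 := by rw [hFTC, ← hval]; exact hineq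
  have heq : g (x + h) - g x - hess x h = φ 1 - φ 0 := by
    simp only [hφ, one_smul, zero_smul, smul_zero, add_zero]
    abel
  rw [heq]; exact hfin

lemma aux_cubic {E : Type*} [NormedAddCommGroup E] [InnerProductSpace ℝ E] [CompleteSpace E]
    (f : E → ℝ) (g : E → E) (hess : E → E →L[ℝ] E) (L : ℝ)
    (hg : ∀ u, HasGradientAt f (g u) u)
    (hhess : ∀ u, HasFDerivAt g (hess u) u)
    (hLip : ∀ u v, ‖hess u - hess v‖ ≤ L * ‖u - v‖)
    (x h : E) :
    |f (x + h) - f x - ⟪g x, h⟫ - 1 / 2 * ⟪hess x h, h⟫| ≤ L / 6 * ‖h‖ ^ 3 := by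
  have hcontg : Continuous g :=
    continuous_iff_continuousAt.2 fun u => (hhess u).continuousAt
  set c1 : ℝ := ⟪g x, h⟫ with hc1
  set c2 : ℝ := ⟪hess x h, h⟫ with hc2
  set ψ : ℝ → ℝ := fun t => f (x + t • h) - t * c1 - t ^ 2 / 2 * c2 with hψ
  have hline : ∀ t : ℝ, HasDerivAt (fun s : ℝ => x + s • h) h t := by
    intro t
    simpa using ((hasDerivAt_id t).smul_const h).const_add x
  have hψ' : ∀ t : ℝ, HasDerivAt ψ (⟪g (x + t • h), h⟫ - c1 - t * c2) t := by
    intro t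
    have h1 : HasDerivAt (fun t : ℝ => f (x + t • h)) (⟪g (x + t • h), h⟫) t := by
      have := ((hg (x + t • h)).hasFDerivAt).comp_hasDerivAt t (hline t)
      simp only [InnerProductSpace.toDual_apply_apply] at this
      exact this
    have h2 : HasDerivAt (fun t : ℝ => t * c1) c1 t := by
      simpa using (hasDerivAt_id t).mul_const c1
    have h3 : HasDerivAt (fun t : ℝ => t ^ 2 / 2 * c2) (t * c2) t := by
      simpa using ((hasDerivAt_pow 2 t).div_const 2).mul_const c2
    exact (h1.sub h2).sub h3
  have hcont : Continuous fun t : ℝ => ⟪g (x + t • h), h⟫ - c1 - t * c2 := by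
    apply Continuous.sub _ (by continuity)
    apply Continuous.sub _ continuous_const
    exact Continuous.inner (hcontg.comp (by continuity)) continuous_const
  have hFTC : ψ 1 - ψ 0 = ∫ t in (0:ℝ)..1, (⟪g (x + t • h), h⟫ - c1 - t * c2) :=
    (intervalIntegral.integral_eq_sub_of_hasDerivAt (fun t _ => hψ' t)
      (hcont.intervalIntegrable 0 1)).symm
  have hbound : ∀ t ∈ Set.Ioc (0:ℝ) 1,
      ‖⟪g (x + t • h), h⟫ - c1 - t * c2‖ ≤ L / 2 * ‖h‖ ^ 3 * t ^ 2 := by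
    intro t ht
    have hrw : ⟪g (x + t • h), h⟫ - c1 - t * c2
        = ⟪g (x + t • h) - g x - hess x (t • h), h⟫ := by
      rw [hc1, hc2, inner_sub_left, inner_sub_left, map_smul, real_inner_smul_left]
      try ring
    rw [Real.norm_eq_abs, hrw]
    calc |⟪g (x + t • h) - g x - hess x (t • h), h⟫|
        ≤ ‖g (x + t • h) - g x - hess x (t • h)‖ * ‖h‖ := abs_real_inner_le_norm _ _
      _ ≤ (L / 2 * ‖t • h‖ ^ 2) * ‖h‖ :=
          mul_le_mul_of_nonneg_right (aux_quad g hess L hhess hLip x (t • h)) (norm_nonneg _)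
      _ = L / 2 * ‖h‖ ^ 3 * t ^ 2 := by
          rw [norm_smul, Real.norm_eq_abs, abs_of_pos ht.1]
          ring
  have hnn : 0 ≤ L / 6 * ‖h‖ ^ 3 := by
    have h1 := hbound 1 (by constructor <;> norm_num)
    have h0 := norm_nonneg (⟪g (x + (1:ℝ) • h), h⟫ - c1 - 1 * c2)
    nlinarith [h0.trans h1]
  have hineq : ‖∫ t in (0:ℝ)..1, (⟪g (x + t • h), h⟫ - c1 - t * c2)‖
      ≤ |∫ t in (0:ℝ)..1, L / 2 * ‖h‖ ^ 3 * t ^ 2| := by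
    apply intervalIntegral.norm_integral_le_abs_of_norm_le
    · rw [Set.uIoc_of_le (by norm_num : (0:ℝ) ≤ 1)]
      exact (MeasureTheory.ae_restrict_iff' measurableSet_Ioc).2
        (Filter.Eventually.of_forall hbound)
    · exact (continuous_const.mul (continuous_pow 2) :
        Continuous fun t : ℝ => L / 2 * ‖h‖ ^ 3 * t ^ 2).intervalIntegrable 0 1
  have hval : |∫ t in (0:ℝ)..1, L / 2 * ‖h‖ ^ 3 * t ^ 2| = L / 6 * ‖h‖ ^ 3 := by
    rw [intervalIntegral.integral_const_mul, integral_pow]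
    rw [abs_of_nonneg]
    · push_cast; ring
    · push_cast; nlinarith [hnn]
  have hfin : ‖ψ 1 - ψ 0‖ ≤ L / 6 * ‖h‖ ^ 3 := by rw [hFTC, ← hval]; exact hineq
  have heq : f (x + h) - f x - c1 - 1 / 2 * c2 = ψ 1 - ψ 0 := by
    simp only [hψ, one_smul, zero_smul, add_zero, one_pow]
    ring
  rw [show |f (x + h) - f x - ⟪g x, h⟫ - 1 / 2 * ⟪hess x h, h⟫|
    = ‖ψ 1 - ψ 0‖ by rw [Real.norm_eq_abs, ← heq]]
  exact hfin

/-- Theorem 3.2 of the paper with explicit constants: error bound for the recovered Newton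
direction in terms of a bound `Λ_z` on the (L2 operator) norm of a left inverse of the scaled
matrix `M_L^z`. -/
theorem newton_direction_recovery_error_bound
    {n p : ℕ} (hpn : p ≥ n)
    (f : EuclideanSpace ℝ (Fin n) → ℝ)
    (g : EuclideanSpace ℝ (Fin n) → EuclideanSpace ℝ (Fin n))
    (hess : EuclideanSpace ℝ (Fin n) → EuclideanSpace ℝ (Fin n) →L[ℝ] EuclideanSpace ℝ (Fin n))
    (L : ℝ)
    (hg : ∀ u, HasGradientAt f (g u) u)
    (hhess : ∀ u, HasFDerivAt g (hess u) u)
    (hLip : ∀ u v, ‖hess u - hess v‖ ≤ L * ‖u - v‖)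
    (x : EuclideanSpace ℝ (Fin n))
    -- invertibility of `∇²f(x)`, with inverse `Hinv`:
    (Hinv : EuclideanSpace ℝ (Fin n) →L[ℝ] EuclideanSpace ℝ (Fin n))
    (hinv₁ : ∀ u, Hinv (hess x u) = u) (hinv₂ : ∀ u, hess x (Hinv u) = u)
    (y : Fin p → EuclideanSpace ℝ (Fin n))
    (z : Fin p → EuclideanSpace ℝ (Fin n)) (hz : ∀ ℓ, z ℓ = hess x (y ℓ - x))
    (Δy : ℝ) (hΔy : IsGreatest (Set.range fun ℓ => ‖y ℓ - x‖) Δy)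
    (Δz : ℝ) (hΔz : IsGreatest (Set.range fun ℓ => ‖z ℓ‖) Δz) (hΔzpos : 0 < Δz)
    (Mz : Matrix (Fin p) (Fin n) ℝ) (hMz : ∀ ℓ i, Mz ℓ i = (1 / Δz) * z ℓ i)
    (Λz : ℝ)
    (A : Matrix (Fin n) (Fin p) ℝ) (hA : A * Mz = 1) (hAnorm : ‖A‖ ≤ Λz)
    (dN : EuclideanSpace ℝ (Fin n))
    (hdN : ∀ ℓ : Fin p, ⟪z ℓ, dN⟫ = -f (y ℓ) + f x + (1 / 2) * ⟪y ℓ - x, z ℓ⟫) :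
    ‖-Hinv (g x) - dN‖ ≤ Λz * Real.sqrt p * (L / 6) * Δy ^ 3 / Δz := by
  classical
  -- p is positive
  obtain ⟨ℓ₀, hℓ₀⟩ := hΔz.1
  -- Δy is nonnegative
  have hΔynn : 0 ≤ Δy := by
    obtain ⟨ℓ₁, hℓ₁⟩ := hΔy.1
    rw [← hℓ₁]; exact norm_nonneg _
  set e : EuclideanSpace ℝ (Fin n) := -Hinv (g x) - dN with he
  -- trivial case n = 0
  rcases Nat.eq_zero_or_pos n with hn0 | hnpos
  · subst hn0
    have he0 : e = 0 := Subsingleton.elim _ _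
    have hΔy0 : Δy = 0 := by
      obtain ⟨ℓ₁, hℓ₁⟩ := hΔy.1
      rw [← hℓ₁]
      show ‖y ℓ₁ - x‖ = 0
      have h00 : y ℓ₁ - x = 0 := Subsingleton.elim _ _
      rw [h00, norm_zero]
    rw [he0, norm_zero, hΔy0]
    simp
  -- L is nonnegative
  have hL : 0 ≤ L := by
    have hu : ‖(EuclideanSpace.single ⟨0, hnpos⟩ (1 : ℝ) : EuclideanSpace ℝ (Fin n))‖ = 1 := by
      rw [EuclideanSpace.norm_single]; exact norm_one
    have h1 : (0:ℝ) ≤ L * ‖(EuclideanSpace.single ⟨0, hnpos⟩ (1 : ℝ) :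
        EuclideanSpace ℝ (Fin n)) - 0‖ :=
      le_trans (norm_nonneg _) (hLip _ 0)
    rw [sub_zero, hu, mul_one] at h1
    exact h1
  -- symmetry of the Hessian
  have hsym : ∀ v w : EuclideanSpace ℝ (Fin n), ⟪hess x v, w⟫ = ⟪hess x w, v⟫ := by
    set D : EuclideanSpace ℝ (Fin n) →L[ℝ] StrongDual ℝ (EuclideanSpace ℝ (Fin n)) :=
      (InnerProductSpace.toDual ℝ
        (EuclideanSpace ℝ (Fin n))).toContinuousLinearEquiv.toContinuousLinearMap with hD
    intro v w
    have hf' : ∀ u, HasFDerivAt f ((InnerProductSpace.toDual ℝ (EuclideanSpace ℝ (Fin n))) (g u)) u :=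
      fun u => (hg u).hasFDerivAt
    have hDd : HasFDerivAt (fun u => (InnerProductSpace.toDual ℝ (EuclideanSpace ℝ (Fin n))) (g u))
        (D.comp (hess x)) x := D.hasFDerivAt.comp x (hhess x)
    have hs := second_derivative_symmetric hf' hDd v w
    simpa [hD, InnerProductSpace.toDual_apply_apply] using hs
  -- the key interpolation identity
  have hinner : ∀ ℓ, ⟪z ℓ, e⟫
      = f (y ℓ) - f x - ⟪g x, y ℓ - x⟫ - 1 / 2 * ⟪hess x (y ℓ - x), y ℓ - x⟫ := by
    intro ℓ
    have h1 : ⟪z ℓ, -Hinv (g x)⟫ = -⟪g x, y ℓ - x⟫ := by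
      rw [hz ℓ, hsym (y ℓ - x) (-Hinv (g x)), map_neg, hinv₂, inner_neg_left]
    have h2 : ⟪y ℓ - x, z ℓ⟫ = ⟪hess x (y ℓ - x), y ℓ - x⟫ := by
      rw [hz ℓ, real_inner_comm]
    rw [he, inner_sub_right, h1, hdN ℓ, h2]
    ring
  -- cubic Taylor bound for each sample point
  have hkey : ∀ ℓ, |⟪z ℓ, e⟫| ≤ L / 6 * Δy ^ 3 := by
    intro ℓ
    have hT := aux_cubic f g hess L hg hhess hLip x (y ℓ - x)
    rw [add_sub_cancel] at hT
    rw [hinner ℓ]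
    refine hT.trans ?_
    have hle : ‖y ℓ - x‖ ≤ Δy := hΔy.2 ⟨ℓ, rfl⟩
    have := pow_le_pow_left₀ (norm_nonneg (y ℓ - x)) hle 3
    nlinarith
  -- pass to linear algebra
  set ev : Fin n → ℝ := fun i => e i with hev
  set wv : EuclideanSpace ℝ (Fin p) :=
    (EuclideanSpace.equiv (Fin p) ℝ).symm (Mz *ᵥ ev) with hwv
  have hwventry : ∀ ℓ, wv ℓ = (1 / Δz) * ⟪z ℓ, e⟫ := by
    intro ℓ
    have h0 : wv ℓ = ∑ i, Mz ℓ i * ev i := rfl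
    have h1 : ⟪z ℓ, e⟫ = ∑ i, z ℓ i * e i := by
      simp [PiLp.inner_apply, RCLike.inner_apply, conj_trivial]
      exact Finset.sum_congr rfl (fun i _ => mul_comm _ _)
    rw [h0, h1, Finset.mul_sum]
    apply Finset.sum_congr rfl
    intro i _
    rw [hMz]
    ring
  set c : ℝ := L / 6 * Δy ^ 3 / Δz with hc
  have hcnn : 0 ≤ c := by
    apply div_nonneg _ hΔzpos.le
    positivity
  have hwvbound : ‖wv‖ ≤ Real.sqrt p * c := by
    rw [EuclideanSpace.norm_eq]
    have hsum : ∑ ℓ, ‖wv ℓ‖ ^ 2 ≤ (p : ℝ) * c ^ 2 := by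
      calc ∑ ℓ, ‖wv ℓ‖ ^ 2 ≤ ∑ _ℓ : Fin p, c ^ 2 := by
            apply Finset.sum_le_sum
            intro ℓ _
            have h1 : ‖wv ℓ‖ ≤ c := by
              rw [hwventry ℓ, Real.norm_eq_abs, abs_mul,
                abs_of_pos (by positivity : (0:ℝ) < 1 / Δz)]
              calc 1 / Δz * |⟪z ℓ, e⟫| ≤ 1 / Δz * (L / 6 * Δy ^ 3) :=
                    mul_le_mul_of_nonneg_left (hkey ℓ) (by positivity)
                _ = c := by rw [hc]; ring
            nlinarith [norm_nonneg (wv ℓ)]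
        _ = (p : ℝ) * c ^ 2 := by
            rw [Finset.sum_const, Finset.card_fin, nsmul_eq_mul]
    calc Real.sqrt (∑ ℓ, ‖wv ℓ‖ ^ 2) ≤ Real.sqrt ((p : ℝ) * c ^ 2) :=
          Real.sqrt_le_sqrt hsum
      _ = Real.sqrt p * c := by
          rw [Real.sqrt_mul (Nat.cast_nonneg p), Real.sqrt_sq hcnn]
  have hee : e = (EuclideanSpace.equiv (Fin n) ℝ).symm (A *ᵥ (Mz *ᵥ ev)) := by
    rw [Matrix.mulVec_mulVec, hA, Matrix.one_mulVec]
    rfl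
  have hnorm : ‖e‖ ≤ ‖A‖ * ‖wv‖ := by
    rw [hee]
    exact Matrix.l2_opNorm_mulVec A wv
  have hfinal : ‖e‖ ≤ Λz * (Real.sqrt p * c) :=
    hnorm.trans (mul_le_mul hAnorm hwvbound (norm_nonneg _)
      (le_trans (norm_nonneg _) hAnorm))
  refine hfinal.trans (le_of_eq ?_)
  rw [hc]
  ring
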